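/- Let f : ℕ → ℕ be a polynomial function, i.e. f(x) = Σ_{k=0}^{n} a_k x^k for some n ≥ 0 and coefficients a_0, a_1, …, a_n ∈ ℕ ∪ {0}, mapping positive naturals to positive naturals. Then f is continuous as a map from M(ℕ) to M(ℕ) if and only if for every prime number p, the preimage f⁻¹(σ_p) equals σ_p, equals all of ℕ, or is empty. -/

import Mathlib

open Topology

/-- For `n` a positive natural, `σ_n = {m ∈ ℕ⁺ : gcd(n,m) = 1}`. -/
def sigmaSet (n : ℕ+) : Set ℕ+ := {m : ℕ+ | Nat.Coprime (n : ℕ) (m : ℕ)}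

/-- The Macías topology `τ_M` on the positive naturals, generated by the sets `σ_n`. -/
def tauM : TopologicalSpace ℕ+ :=
  TopologicalSpace.generateFrom (Set.range sigmaSet)

/-- `f : ℕ⁺ → ℕ⁺` is a polynomial function with coefficients in `ℕ ∪ {0}`. -/
def IsPolyFun (f : ℕ+ → ℕ+) : Prop :=
  ∃ (n : ℕ) (a : ℕ → ℕ),
    ∀ x : ℕ+, (f x : ℕ) = ∑ k ∈ Finset.range (n + 1), a k * (x : ℕ) ^ k

lemma sigmaSet_mul (m n : ℕ+) : sigmaSet (m * n) = sigmaSet m ∩ sigmaSet n := by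
  ext x
  simp [sigmaSet, Nat.coprime_mul_iff_left, Set.mem_inter_iff, Set.mem_setOf_eq]

lemma sigmaSet_one : sigmaSet 1 = Set.univ := by
  ext x
  simp [sigmaSet, Nat.coprime_one_left]

/-- Every nonempty open set in the Macías topology contains a basic set `σ_n`
around each of its points. -/
lemma exists_sigma_subset {U : Set ℕ+} (hU : IsOpen[tauM] U) :
    ∀ x ∈ U, ∃ n : ℕ+, x ∈ sigmaSet n ∧ sigmaSet n ⊆ U := by
  have hU' : TopologicalSpace.GenerateOpen (Set.range sigmaSet) U := hU
  clear hU
  induction hU' with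
  | basic s hs =>
    obtain ⟨n, rfl⟩ := hs
    exact fun x hx => ⟨n, hx, subset_rfl⟩
  | univ =>
    exact fun x _ => ⟨1, by simp [sigmaSet_one], Set.subset_univ _⟩
  | inter s t hs ht ihs iht =>
    intro x hx
    obtain ⟨m, hm, hms⟩ := ihs x hx.1
    obtain ⟨n, hn, hnt⟩ := iht x hx.2
    refine ⟨m * n, ?_, ?_⟩
    · rw [sigmaSet_mul]; exact ⟨hm, hn⟩
    · rw [sigmaSet_mul]
      exact fun z hz => ⟨hms hz.1, hnt hz.2⟩
  | sUnion S hS ih =>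
    rintro x ⟨t, htS, hxt⟩
    obtain ⟨n, hn, hsub⟩ := ih t htS x hxt
    exact ⟨n, hn, hsub.trans (Set.subset_sUnion_of_mem htS)⟩

/-- CRT existence lemma: given a prime `p` and `n ≥ 1`, and `r` with `p ∣ n → ¬ p ∣ r`,
there is a positive `x ≡ r (mod p)` coprime to `n`. -/
lemma crt_exists {p n : ℕ} (hp : p.Prime) (hn : 0 < n) (r : ℕ) (hr : p ∣ n → ¬ p ∣ r) :
    ∃ x : ℕ, 0 < x ∧ x ≡ r [MOD p] ∧ Nat.Coprime n x := by
  set m := n / p ^ (n.factorization p) with hm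
  have hmpos : 0 < m := Nat.ordCompl_pos p hn.ne'
  have hcop : Nat.Coprime p m := Nat.coprime_ordCompl hp hn.ne'
  obtain ⟨x0, hx0p, hx0m⟩ := Nat.chineseRemainder hcop r 1
  refine ⟨x0 + p * m, Nat.add_pos_right _ (Nat.mul_pos hp.pos hmpos), ?_, ?_⟩
  · have : (x0 + p * m) % p = x0 % p := Nat.add_mul_mod_self_left x0 p m
    exact (Nat.ModEq.trans (show (x0 + p * m) ≡ x0 [MOD p] from this) hx0p)
  · set x := x0 + p * m with hx
    have hxm : x ≡ 1 [MOD m] := by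
      have : x % m = x0 % m := by
        rw [hx, mul_comm p m, ← Nat.add_mul_mod_self_left x0 m p]
      exact Nat.ModEq.trans (show x ≡ x0 [MOD m] from this) hx0m
    have hcm : Nat.Coprime m x := by
      have h1 : Nat.gcd x m = Nat.gcd 1 m := Nat.ModEq.gcd_eq hxm
      have h2 : Nat.Coprime x m := by simpa [Nat.Coprime] using h1
      exact h2.symm
    have hcpk : Nat.Coprime (p ^ (n.factorization p)) x := by
      by_cases hdvd : p ∣ n
      · have hpr : ¬ p ∣ r := hr hdvd
        have hxp : x ≡ r [MOD p] := by
          have : x % p = x0 % p := Nat.add_mul_mod_self_left x0 p m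
          exact Nat.ModEq.trans (show x ≡ x0 [MOD p] from this) hx0p
        have hpx : ¬ p ∣ x := by
          intro hdx
          exact hpr ((Nat.modEq_zero_iff_dvd).1
            (((Nat.modEq_zero_iff_dvd).2 hdx).symm.trans hxp).symm)
        exact (Nat.Prime.coprime_iff_not_dvd hp).2 hpx |>.pow_left _
      · have : n.factorization p = 0 := Nat.factorization_eq_zero_of_not_dvd hdvd
        simp [this]
    have hsplit : n = p ^ (n.factorization p) * m := (Nat.ordProj_mul_ordCompl_eq_self n p).symm
    rw [hsplit]
    exact Nat.Coprime.mul hcpk hcm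

/-- A polynomial function respects congruences mod `p`. -/
lemma poly_dvd_iff {f : ℕ+ → ℕ+} (hf : IsPolyFun f) {p : ℕ} (hp : p.Prime)
    {x y : ℕ+} (h : (x : ℕ) ≡ (y : ℕ) [MOD p]) :
    (p ∣ (f x : ℕ) ↔ p ∣ (f y : ℕ)) := by
  obtain ⟨n, a, ha⟩ := hf
  haveI : NeZero p := ⟨hp.ne_zero⟩
  have hcast : ((x : ℕ) : ZMod p) = ((y : ℕ) : ZMod p) :=
    (ZMod.natCast_eq_natCast_iff _ _ _).2 h
  have key : (((f x : ℕ)) : ZMod p) = (((f y : ℕ)) : ZMod p) := by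
    rw [ha x, ha y]
    push_cast
    rw [hcast]
  rw [← ZMod.natCast_eq_zero_iff, ← ZMod.natCast_eq_zero_iff, key]

theorem poly_continuous_iff (f : ℕ+ → ℕ+) (hf : IsPolyFun f) :
    Continuous[tauM, tauM] f ↔
      ∀ p : ℕ+, (p : ℕ).Prime →
        f ⁻¹' sigmaSet p = sigmaSet p ∨ f ⁻¹' sigmaSet p = Set.univ ∨
          f ⁻¹' sigmaSet p = ∅ := by
  constructor
  · intro hc p hp
    letI : TopologicalSpace ℕ+ := tauM
    have hc' : Continuous f := hc
    set S := f ⁻¹' sigmaSet p with hSdef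
    have hSopen : IsOpen[tauM] S := by
      refine hc'.isOpen_preimage _ ?_
      exact TopologicalSpace.isOpen_generateFrom_of_mem ⟨p, rfl⟩
    -- membership in S
    have hmemS : ∀ y : ℕ+, y ∈ S ↔ ¬ (p : ℕ) ∣ (f y : ℕ) := by
      intro y
      rw [hSdef, Set.mem_preimage]
      exact (Nat.Prime.coprime_iff_not_dvd hp)
    by_cases hSne : S = ∅
    · exact Or.inr (Or.inr hSne)
    · obtain ⟨x₀, hx₀⟩ := Set.nonempty_iff_ne_empty.2 hSne
      obtain ⟨n, hxn, hsub⟩ := exists_sigma_subset hSopen x₀ hx₀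
      -- S contains σ_p
      have hsp : sigmaSet p ⊆ S := by
        intro y hy
        have hpy : ¬ (p : ℕ) ∣ (y : ℕ) := (Nat.Prime.coprime_iff_not_dvd hp).1 hy
        obtain ⟨x, hxpos, hxmod, hxcop⟩ := crt_exists hp n.pos (y : ℕ) (fun _ => hpy)
        set x' : ℕ+ := ⟨x, hxpos⟩ with hx'
        have hxmod' : (x' : ℕ) ≡ (y : ℕ) [MOD p] := hxmod
        have hx'S : x' ∈ S := hsub hxcop
        rw [hmemS] at hx'S ⊢
        intro hd
        exact hx'S ((poly_dvd_iff hf hp hxmod').2 hd)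
      by_cases h0 : ∃ y ∈ S, (p : ℕ) ∣ (y : ℕ)
      · -- S = univ
        obtain ⟨y, hyS, hyp⟩ := h0
        refine Or.inr (Or.inl ?_)
        ext z
        simp only [Set.mem_univ, iff_true]
        by_cases hz : (p : ℕ) ∣ (z : ℕ)
        · have hmod : (z : ℕ) ≡ (y : ℕ) [MOD p] :=
            ((Nat.modEq_zero_iff_dvd).2 hz).trans ((Nat.modEq_zero_iff_dvd).2 hyp).symm
          rw [hmemS] at hyS ⊢
          exact fun hd => hyS ((poly_dvd_iff hf hp hmod).1 hd)
        · exact hsp ((Nat.Prime.coprime_iff_not_dvd hp).2 hz)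
      · -- S = σ_p
        refine Or.inl ?_
        apply Set.Subset.antisymm _ hsp
        intro y hyS
        exact (Nat.Prime.coprime_iff_not_dvd hp).2 (fun hd => h0 ⟨y, hyS, hd⟩)
  · intro h
    letI : TopologicalSpace ℕ+ := tauM
    refine continuous_generateFrom_iff.2 ?_
    rintro s ⟨n, rfl⟩
    -- decompose σ_n by prime factors
    have hdecomp : f ⁻¹' sigmaSet n =
        ⋂ p ∈ (n : ℕ).primeFactors, f ⁻¹' {m : ℕ+ | Nat.Coprime p (m : ℕ)} := by
      ext x
      simp only [Set.mem_preimage, Set.mem_iInter, sigmaSet, Set.mem_setOf_eq,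
        Nat.mem_primeFactors]
      constructor
      · rintro hcop q ⟨hq, hqn, -⟩
        exact Nat.Coprime.coprime_dvd_left hqn hcop
      · intro hall
        by_contra hnc
        obtain ⟨q, hq, hqn, hqf⟩ := Nat.Prime.not_coprime_iff_dvd.1 hnc
        exact (Nat.Prime.coprime_iff_not_dvd hq).1 (hall q ⟨hq, hqn, n.ne_zero⟩) hqf
    rw [hdecomp]
    refine Set.Finite.isOpen_biInter (Finset.finite_toSet _) ?_
    intro q hq
    have hqprime : q.Prime := Nat.prime_of_mem_primeFactors hq
    have : f ⁻¹' {m : ℕ+ | Nat.Coprime q (m : ℕ)} = f ⁻¹' sigmaSet ⟨q, hqprime.pos⟩ := rfl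
    rw [this]
    rcases h ⟨q, hqprime.pos⟩ hqprime with h1 | h1 | h1 <;> rw [h1]
    · exact TopologicalSpace.isOpen_generateFrom_of_mem ⟨_, rfl⟩
    · exact isOpen_univ
    · exact isOpen_empty
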